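/- Consider the poset ω+1 ordered by the converse of the ordinal order (so ω is the bottom-most in the presheaf base). Define the presheaf X on this poset by X(n) = {0,...,n} for finite n and X(ω) = ℕ, with restriction maps X(β ⊵ α)(n) = min(n, α). Define f : X → X by f_n(i) = min(i+1, n) and f_ω(i) = i+1. Then f is a natural transformation (a morphism of presheaves) but f has no global fixed point: there is no natural transformation c : 1 → X with f ∘ c = c. -/

import Mathlib

/-- Restriction map of the presheaf `X` on `(ω+1, ⊵)`:
`ρ α i = min (i, α)`, computed in `ℕ` (when `α = ⊤` it is `i` itself). -/
def presheafRho (α : ℕ∞) (i : ℕ) : ℕ := min i (α.untopD i)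

/-- The endomorphism `f`: `f_α i = min (i + 1, α)`, i.e. `i + 1` at level `ω`. -/
def presheafF (α : ℕ∞) (i : ℕ) : ℕ := min (i + 1) (α.untopD (i + 1))

lemma untopTop (d : ℕ) : (⊤ : ℕ∞).untopD d = d := rfl

lemma untopCoe (d n : ℕ) : ((n : ℕ∞)).untopD d = n := rfl

theorem no_global_fixpoint :
    (∀ α : ℕ∞, ∀ i : ℕ, (i : ℕ∞) ≤ α → (presheafF α i : ℕ∞) ≤ α) ∧
    (∀ α β : ℕ∞, α ≤ β → ∀ i : ℕ, (i : ℕ∞) ≤ β →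
        presheafRho α (presheafF β i) = presheafF α (presheafRho α i)) ∧
    ¬ ∃ c : ℕ∞ → ℕ,
        (∀ α : ℕ∞, ((c α : ℕ∞)) ≤ α) ∧
        (∀ α β : ℕ∞, α ≤ β → presheafRho α (c β) = c α) ∧
        (∀ α : ℕ∞, presheafF α (c α) = c α) := by
  refine ⟨?_, ?_, ?_⟩
  · intro α i _
    cases α using ENat.recTopCoe with
    | top => simp
    | coe n =>
      simp only [presheafF, untopCoe]
      exact_mod_cast (min_le_right _ _)
  · intro α β hab i hib
    cases α using ENat.recTopCoe with
    | top =>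
      cases β using ENat.recTopCoe with
      | top => simp [presheafRho, presheafF, untopTop]
      | coe m => exact absurd hab (by simp)
    | coe n =>
      cases β using ENat.recTopCoe with
      | top =>
        simp only [presheafRho, presheafF, untopCoe, untopTop]
        omega
      | coe m =>
        have hnm : n ≤ m := by exact_mod_cast hab
        have him : i ≤ m := by exact_mod_cast hib
        simp only [presheafRho, presheafF, untopCoe]
        omega
  · rintro ⟨c, -, -, hfix⟩
    have := hfix ⊤
    rw [presheafF, untopTop] at this
    omega
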